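/- Let k ≥ 7 be an integer and let G be a finite simple graph with Δ(G) ≤ k. Suppose G contains a vertex u of degree 4 whose four neighbors u₁, u₂, w, v satisfy deg(u₁) = deg(u₂) = 3, deg(w) ≤ Δ(G) − 1 and deg(v) ≤ Δ(G). If G − u admits an incidence (k+3, 3)-coloring, then G admits an incidence (k+3, 3)-coloring. -/

import Mathlib

open SimpleGraph

/-- An incidence coloring of `G` with `n` colors, where `φ v u` is the color of the
incidence `(v, vu)` (meaningful when `G.Adj v u`): two distinct adjacent incidences
`(v, vu)` and `(w, wx)` receive distinct colors. Incidences `(v, e)` and `(w, f)` are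
adjacent if `v = w`, or `e = f`, or the edge `vw` equals `e` or `f`. -/
def IsIncidenceColoring {V : Type*} (G : SimpleGraph V) {n : ℕ} (φ : V → V → Fin n) : Prop :=
  ∀ ⦃v u w x : V⦄, G.Adj v u → G.Adj w x → (v, u) ≠ (w, x) →
    (v = w ∨ s(v, u) = s(w, x) ∨ s(v, w) = s(v, u) ∨ s(v, w) = s(w, x)) →
    φ v u ≠ φ w x

/-- `G` admits an incidence `(n, ℓ)`-coloring: an incidence coloring with `n` colors such
that for every vertex `v`, at most `ℓ` distinct colors appear on the incidences of the
form `(u, uv)` where `u` ranges over the neighbors of `v`. -/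
def HasIncidenceColoring {V : Type*} (G : SimpleGraph V) (n ℓ : ℕ) : Prop :=
  ∃ φ : V → V → Fin n, IsIncidenceColoring G φ ∧
    ∀ v : V, ({c : Fin n | ∃ u : V, G.Adj u v ∧ φ u v = c}).ncard ≤ ℓ

/-- The incidence chromatic number: the least `n` such that `G` admits an incidence
`n`-coloring. -/
noncomputable def incChromaticNumber {V : Type*} (G : SimpleGraph V) : ℕ :=
  sInf {n : ℕ | ∃ φ : V → V → Fin n, IsIncidenceColoring G φ}

/-- `mad(G) < q`: every nonempty subgraph `H` of `G` satisfies `2|E(H)| < q·|V(H)|`. -/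
def MadLT {V : Type*} (G : SimpleGraph V) (q : ℝ) : Prop :=
  ∀ H : G.Subgraph, H.verts.Nonempty →
    (2 * H.edgeSet.ncard : ℝ) < q * H.verts.ncard

open Finset in

private lemma exists_notMem_of_card_lt {n : ℕ} (S : Finset (Fin n)) (h : S.card < n) :
    ∃ c, c ∉ S := by
  have : Sᶜ.Nonempty := by
    rw [← Finset.card_pos, Finset.card_compl]
    simp only [Fintype.card_fin]
    omega
  obtain ⟨c, hc⟩ := this
  exact ⟨c, Finset.mem_compl.1 hc⟩

private lemma sym2_cond {α : Type*} {x y z t : α} (hxy : x ≠ y) (hzt : z ≠ t) :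
    (x = z ∨ s(x, y) = s(z, t) ∨ s(x, z) = s(x, y) ∨ s(x, z) = s(z, t)) ↔
      (x = z ∨ y = z ∨ x = t) := by
  simp only [Sym2.eq_iff]
  constructor
  · rintro (h|h|h|h) <;> tauto
  · rintro (h|h|h) <;> tauto

private lemma card_insert_le' {α : Type*} [DecidableEq α] (a : α) (s : Finset α) {m : ℕ}
    (h : s.card ≤ m) : (insert a s).card ≤ m + 1 :=
  le_trans (Finset.card_insert_le _ _) (by omega)

theorem incidence_extend_four_vertex_two_threes {V : Type*} [Fintype V] (G : SimpleGraph V)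
    [DecidableRel G.Adj] (k : ℕ) (hk : 7 ≤ k) (hΔ : G.maxDegree ≤ k)
    (u u₁ u₂ w v : V) (h1 : G.Adj u u₁) (h2 : G.Adj u u₂) (hw : G.Adj u w) (hv : G.Adj u v)
    (h12 : u₁ ≠ u₂) (h1w : u₁ ≠ w) (h1v : u₁ ≠ v) (h2w : u₂ ≠ w) (h2v : u₂ ≠ v) (hwv : w ≠ v)
    (hdu : G.degree u = 4)
    (hd1 : G.degree u₁ = 3) (hd2 : G.degree u₂ = 3)
    (hdw : G.degree w ≤ G.maxDegree - 1) (hdv : G.degree v ≤ G.maxDegree)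
    (hcol : HasIncidenceColoring (G.induce ({u}ᶜ : Set V)) (k + 3) 3) :
    HasIncidenceColoring G (k + 3) 3 := by
  classical
  obtain ⟨φ', hcol', hcard'⟩ := hcol
  have hu1 : u₁ ≠ u := h1.ne'
  have hu2 : u₂ ≠ u := h2.ne'
  have hwu : w ≠ u := hw.ne'
  have hvu : v ≠ u := hv.ne'
  -- neighborhood of u
  have hsub : ({u₁, u₂, w, v} : Finset V) ⊆ G.neighborFinset u := by
    intro y hy
    simp only [Finset.mem_insert, Finset.mem_singleton] at hy
    rcases hy with rfl|rfl|rfl|rfl <;> simp [mem_neighborFinset, h1, h2, hw, hv]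
  have hcard4 : ({u₁, u₂, w, v} : Finset V).card = 4 := by
    rw [Finset.card_insert_of_notMem (by simp [h12, h1w, h1v]),
      Finset.card_insert_of_notMem (by simp [h2w, h2v]),
      Finset.card_insert_of_notMem (by simp [hwv]), Finset.card_singleton]
  have hNset : G.neighborFinset u = {u₁, u₂, w, v} :=
    (Finset.eq_of_subset_of_card_le hsub
      (by rw [hcard4]; rw [show (G.neighborFinset u).card = G.degree u from rfl, hdu])).symm
  have hN : ∀ y, G.Adj u y → y = u₁ ∨ y = u₂ ∨ y = w ∨ y = v := by
    intro y hy
    have : y ∈ G.neighborFinset u := (mem_neighborFinset _ _ _).2 hy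
    rw [hNset] at this
    simpa using this
  -- total version of φ'
  set ψ : V → V → Fin (k + 3) :=
    fun x y => if h : x ≠ u ∧ y ≠ u then φ' ⟨x, h.1⟩ ⟨y, h.2⟩ else 0 with hψdef
  have hψ : ∀ {x y z t : V}, x ≠ u → y ≠ u → z ≠ u → t ≠ u → G.Adj x y → G.Adj z t →
      (x, y) ≠ (z, t) → (x = z ∨ y = z ∨ x = t) → ψ x y ≠ ψ z t := by
    intro x y z t hx hy hz ht hxy hzt hne hcond
    have hA : (G.induce ({u}ᶜ : Set V)).Adj ⟨x, hx⟩ ⟨y, hy⟩ := comap_adj.mpr hxy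
    have hB : (G.induce ({u}ᶜ : Set V)).Adj ⟨z, hz⟩ ⟨t, ht⟩ := comap_adj.mpr hzt
    have hne' : ((⟨x, hx⟩ : ({u}ᶜ : Set V)), (⟨y, hy⟩ : ({u}ᶜ : Set V))) ≠ (⟨z, hz⟩, ⟨t, ht⟩) := by
      simp only [ne_eq, Prod.mk.injEq, Subtype.mk.injEq, not_and]
      intro hxz hyt
      exact hne (Prod.ext (congrArg Subtype.val hxz) (congrArg Subtype.val hyt))
    have hcond' := hcol' hA hB hne' ?_
    · simpa [hψdef, hx, hy, hz, ht] using hcond'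
    · rcases hcond with h|h|h
      · exact Or.inl (Subtype.ext h)
      · refine Or.inr (Or.inr (Or.inl ?_))
        have hyz : (⟨z, hz⟩ : ({u}ᶜ : Set V)) = ⟨y, hy⟩ := Subtype.ext h.symm
        rw [hyz]
      · refine Or.inr (Or.inr (Or.inr ?_))
        have hxt : (⟨t, ht⟩ : ({u}ᶜ : Set V)) = ⟨x, hx⟩ := Subtype.ext h.symm
        rw [hxt]
        exact Sym2.eq_swap
  -- out/in color Finsets
  set NB : V → Finset V := fun x => (G.neighborFinset x).erase u with hNBdef
  set O : V → Finset (Fin (k + 3)) := fun x => (NB x).image (fun y => ψ x y) with hOdef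
  set I : V → Finset (Fin (k + 3)) := fun x => (NB x).image (fun y => ψ y x) with hIdef
  have hmemO : ∀ x c, c ∈ O x ↔ ∃ y, y ≠ u ∧ G.Adj x y ∧ ψ x y = c := by
    intro x c
    simp only [hOdef, hNBdef, Finset.mem_image, Finset.mem_erase, mem_neighborFinset]
    constructor
    · rintro ⟨y, ⟨hy1, hy2⟩, hy3⟩
      exact ⟨y, hy1, hy2, hy3⟩
    · rintro ⟨y, hy1, hy2, hy3⟩
      exact ⟨y, ⟨hy1, hy2⟩, hy3⟩
  have hmemI : ∀ x c, c ∈ I x ↔ ∃ y, y ≠ u ∧ G.Adj x y ∧ ψ y x = c := by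
    intro x c
    simp only [hIdef, hNBdef, Finset.mem_image, Finset.mem_erase, mem_neighborFinset]
    constructor
    · rintro ⟨y, ⟨hy1, hy2⟩, hy3⟩
      exact ⟨y, hy1, hy2, hy3⟩
    · rintro ⟨y, hy1, hy2, hy3⟩
      exact ⟨y, ⟨hy1, hy2⟩, hy3⟩
  have memO : ∀ {p q : V}, q ≠ u → G.Adj p q → ψ p q ∈ O p :=
    fun hq hpq => (hmemO _ _).2 ⟨_, hq, hpq, rfl⟩
  have memI : ∀ {p q : V}, q ≠ u → G.Adj p q → ψ q p ∈ I p :=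
    fun hq hpq => (hmemI _ _).2 ⟨_, hq, hpq, rfl⟩
  have hNBcard : ∀ x, G.Adj u x → (NB x).card = G.degree x - 1 := by
    intro x hx
    rw [hNBdef]
    simp only
    rw [Finset.card_erase_of_mem ((mem_neighborFinset _ _ _).2 hx.symm)]
    rfl
  have hOcard : ∀ x, G.Adj u x → (O x).card ≤ G.degree x - 1 := by
    intro x hx
    exact le_trans (Finset.card_image_le) (le_of_eq (hNBcard x hx))
  have hIcard : ∀ x, G.Adj u x → (I x).card ≤ G.degree x - 1 := by
    intro x hx
    exact le_trans (Finset.card_image_le) (le_of_eq (hNBcard x hx))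
  have hI3 : ∀ x (hx : x ≠ u), (I x).card ≤ 3 := by
    intro x hx
    have hsub2 : (↑(I x) : Set (Fin (k + 3))) ⊆
        {c | ∃ u' : ({u}ᶜ : Set V), (G.induce ({u}ᶜ : Set V)).Adj u' ⟨x, hx⟩ ∧ φ' u' ⟨x, hx⟩ = c} := by
      intro c hc
      rw [Finset.mem_coe, hmemI] at hc
      obtain ⟨y, hyu, hadj, hcy⟩ := hc
      refine ⟨⟨y, hyu⟩, comap_adj.mpr hadj.symm, ?_⟩
      rw [← hcy]
      simp [hψdef, hyu, hx]
    have := Set.ncard_le_ncard hsub2 (Set.toFinite _)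
    rw [Set.ncard_coe_finset] at this
    exact le_trans this (hcard' ⟨x, hx⟩)
  have hdisj : ∀ x, x ≠ u → ∀ c, c ∈ I x → c ∉ O x := by
    intro x hx c hcI hcO
    rw [hmemI] at hcI
    rw [hmemO] at hcO
    obtain ⟨y, hyu, hxy, hcy⟩ := hcI
    obtain ⟨z, hzu, hxz, hcz⟩ := hcO
    refine hψ hyu hx hx hzu hxy.symm hxz ?_ (Or.inr (Or.inl rfl)) (by rw [hcy, hcz])
    simp only [ne_eq, Prod.mk.injEq, not_and]
    intro hyx
    exact absurd hyx.symm hxy.ne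
  -- degree bounds
  have hdw' : G.degree w ≤ k - 1 := by
    have h4 : 4 ≤ G.maxDegree := hdu ▸ G.degree_le_maxDegree u
    omega
  have hdv' : G.degree v ≤ k := le_trans hdv hΔ
  have hO1 : (O u₁).card ≤ 2 := by have := hOcard u₁ h1; omega
  have hI1 : (I u₁).card ≤ 2 := by have := hIcard u₁ h1; omega
  have hO2 : (O u₂).card ≤ 2 := by have := hOcard u₂ h2; omega
  have hI2 : (I u₂).card ≤ 2 := by have := hIcard u₂ h2; omega
  have hOw : (O w).card ≤ k - 2 := by have := hOcard w hw; omega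
  have hOv : (O v).card ≤ k - 1 := by have := hOcard v hv; omega
  have hIw3 : (I w).card ≤ 3 := hI3 w hwu
  have hIv3 : (I v).card ≤ 3 := hI3 v hvu
  -- choose a
  obtain ⟨a, ha⟩ := exists_notMem_of_card_lt (O u₁ ∪ I u₁ ∪ O u₂ ∪ I u₂) (by
    have c1 := Finset.card_union_le (O u₁ ∪ I u₁ ∪ O u₂) (I u₂)
    have c2 := Finset.card_union_le (O u₁ ∪ I u₁) (O u₂)
    have c3 := Finset.card_union_le (O u₁) (I u₁)
    omega)
  simp only [Finset.mem_union, not_or] at ha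
  obtain ⟨⟨⟨haO1, haI1⟩, haO2⟩, haI2⟩ := ha
  -- choose pw preferring I w, and secondarily O v ∪ I v
  set Tw : Finset (Fin (k + 3)) :=
    if 3 ≤ (I w).card then I w \ {a} else (O w ∪ {a})ᶜ with hTwdef
  have hTw2 : 2 ≤ Tw.card := by
    rw [hTwdef]
    split_ifs with hbr
    · have := Finset.card_le_card_sdiff_add_card (s := I w) (t := {a})
      simp only [Finset.card_singleton] at this
      omega
    · rw [Finset.card_compl, Fintype.card_fin]
      have c1 := Finset.card_union_le (O w) ({a} : Finset (Fin (k + 3)))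
      simp only [Finset.card_singleton] at c1
      omega
  have hTwprop : ∀ p ∈ Tw, p ∉ O w ∧ p ≠ a ∧ (I w ∪ {p}).card ≤ 3 := by
    intro p hp
    rw [hTwdef] at hp
    split_ifs at hp with hbr
    · rw [Finset.mem_sdiff, Finset.mem_singleton] at hp
      refine ⟨hdisj w hwu p hp.1, hp.2, ?_⟩
      rw [Finset.union_eq_left.mpr (by simpa using hp.1)]
      exact hIw3
    · simp only [Finset.mem_compl, Finset.mem_union, Finset.mem_singleton, not_or] at hp
      refine ⟨hp.1, hp.2, ?_⟩
      have c1 := Finset.card_union_le (I w) ({p} : Finset (Fin (k + 3)))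
      simp only [Finset.card_singleton] at c1
      omega
  obtain ⟨pw, hpwTw, hpwpref⟩ :
      ∃ p ∈ Tw, (p ∉ O v ∪ I v → Tw ∩ (O v ∪ I v) = ∅) := by
    rcases (Tw ∩ (O v ∪ I v)).eq_empty_or_nonempty with he | ⟨p, hp⟩
    · obtain ⟨p, hp⟩ := Finset.card_pos.1 (by omega : 0 < Tw.card)
      exact ⟨p, hp, fun _ => he⟩
    · rw [Finset.mem_inter] at hp
      exact ⟨p, hp.1, fun h => absurd hp.2 h⟩
  obtain ⟨hpwOw, hpwa, hIwpw⟩ := hTwprop pw hpwTw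
  -- choose pv preferring I v
  set Tv : Finset (Fin (k + 3)) :=
    if 3 ≤ (I v).card then I v \ {a, pw} else (O v ∪ {a, pw})ᶜ with hTvdef
  have hTvprop : ∀ p ∈ Tv, p ∉ O v ∧ p ≠ a ∧ p ≠ pw ∧ (I v ∪ {p}).card ≤ 3 := by
    intro p hp
    rw [hTvdef] at hp
    split_ifs at hp with hbr
    · rw [Finset.mem_sdiff, Finset.mem_insert, Finset.mem_singleton] at hp
      push_neg at hp
      refine ⟨hdisj v hvu p hp.1, hp.2.1, hp.2.2, ?_⟩
      rw [Finset.union_eq_left.mpr (by simpa using hp.1)]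
      exact hIv3
    · simp only [Finset.mem_compl, Finset.mem_union, Finset.mem_insert,
        Finset.mem_singleton, not_or] at hp
      refine ⟨hp.1, hp.2.1, hp.2.2, ?_⟩
      have c1 := Finset.card_union_le (I v) ({p} : Finset (Fin (k + 3)))
      simp only [Finset.card_singleton] at c1
      omega
  have hTvalt : Tv ⊆ I v ∨ 2 ≤ Tv.card := by
    rw [hTvdef]
    split_ifs with hbr
    · exact Or.inl (Finset.sdiff_subset)
    · refine Or.inr ?_
      rw [Finset.card_compl, Fintype.card_fin]
      have c1 := Finset.card_union_le (O v) ({a, pw} : Finset (Fin (k + 3)))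
      have c2 : ({a, pw} : Finset (Fin (k + 3))).card ≤ 2 :=
        card_insert_le' _ _ (by simp)
      omega
  have hTvne : Tv.Nonempty := by
    rw [hTvdef]
    split_ifs with hbr
    · rw [← Finset.card_pos]
      have := Finset.card_le_card_sdiff_add_card (s := I v) (t := {a, pw})
      have c2 : ({a, pw} : Finset (Fin (k + 3))).card ≤ 2 :=
        card_insert_le' _ _ (by simp)
      omega
    · rw [← Finset.card_pos, Finset.card_compl, Fintype.card_fin]
      have c1 := Finset.card_union_le (O v) ({a, pw} : Finset (Fin (k + 3)))
      have c2 : ({a, pw} : Finset (Fin (k + 3))).card ≤ 2 :=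
        card_insert_le' _ _ (by simp)
      omega
  obtain ⟨pv, hpvTv, hpvpref⟩ : ∃ p ∈ Tv, (p ∉ I v → Tv ∩ I v = ∅) := by
    rcases (Tv ∩ I v).eq_empty_or_nonempty with he | ⟨p, hp⟩
    · obtain ⟨p, hp⟩ := hTvne
      exact ⟨p, hp, fun _ => he⟩
    · rw [Finset.mem_inter] at hp
      exact ⟨p, hp.1, fun h => absurd hp.2 h⟩
  obtain ⟨hpvOv, hpva, hpvpw, hIvpv⟩ := hTvprop pv hpvTv
  -- choose c
  have hcex : ∃ c', c' ∉ O v ∪ I v ∪ {pv, pw} := by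
    by_cases hpvI : pv ∈ I v
    · by_cases hpwI : pw ∈ O v ∪ I v
      · have hEq : O v ∪ I v ∪ {pv, pw} = O v ∪ I v := by
          rw [Finset.union_eq_left]
          intro x hx
          rw [Finset.mem_insert, Finset.mem_singleton] at hx
          rcases hx with rfl | rfl
          · exact Finset.mem_union_right _ hpvI
          · exact hpwI
        rw [hEq]
        apply exists_notMem_of_card_lt
        have c1 := Finset.card_union_le (O v) (I v)
        omega
      · have hint : Tw ∩ (O v ∪ I v) = ∅ := hpwpref hpwI
        obtain ⟨t, htTw, htpw⟩ := Finset.exists_mem_ne (s := Tw) (by omega) pw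
        refine ⟨t, ?_⟩
        simp only [Finset.mem_union, Finset.mem_insert, Finset.mem_singleton, not_or]
        have htOIv : t ∉ O v ∪ I v := by
          intro hmem
          have : t ∈ Tw ∩ (O v ∪ I v) := Finset.mem_inter.2 ⟨htTw, hmem⟩
          rw [hint] at this
          exact absurd this (Finset.notMem_empty t)
        simp only [Finset.mem_union, not_or] at htOIv
        exact ⟨⟨htOIv.1, htOIv.2⟩, fun h => htOIv.2 (h ▸ hpvI), htpw⟩
    · have hint : Tv ∩ I v = ∅ := hpvpref hpvI
      have h2 : 2 ≤ Tv.card := by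
        rcases hTvalt with hsub' | h2
        · exact absurd (hsub' hpvTv) hpvI
        · exact h2
      obtain ⟨t, htTv, htpv⟩ := Finset.exists_mem_ne (s := Tv) (by omega) pv
      obtain ⟨htOv, hta, htpw, _⟩ := hTvprop t htTv
      have htIv : t ∉ I v := by
        intro hmem
        have : t ∈ Tv ∩ I v := Finset.mem_inter.2 ⟨htTv, hmem⟩
        rw [hint] at this
        exact absurd this (Finset.notMem_empty t)
      refine ⟨t, ?_⟩
      simp only [Finset.mem_union, Finset.mem_insert, Finset.mem_singleton, not_or]
      exact ⟨⟨htOv, htIv⟩, htpv, htpw⟩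
  obtain ⟨c, hc⟩ := hcex
  simp only [Finset.mem_union, Finset.mem_insert, Finset.mem_singleton, not_or] at hc
  obtain ⟨⟨hcOv, hcIv⟩, hcpv, hcpw⟩ := hc
  -- choose b
  obtain ⟨b, hb⟩ := exists_notMem_of_card_lt (O w ∪ (I w ∪ {pw}) ∪ {pv}) (by
    have c1 := Finset.card_union_le (O w ∪ (I w ∪ {pw})) ({pv} : Finset (Fin (k + 3)))
    have c2 := Finset.card_union_le (O w) (I w ∪ {pw})
    simp only [Finset.card_singleton] at c1
    omega)
  simp only [Finset.mem_union, Finset.mem_singleton, not_or] at hb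
  obtain ⟨⟨hbOw, hbIw, hbpw⟩, hbpv⟩ := hb
  -- choose p1
  obtain ⟨p1, hp1⟩ := exists_notMem_of_card_lt (O u₁ ∪ {a, b, c, pv, pw}) (by
    have c1 := Finset.card_union_le (O u₁) ({a, b, c, pv, pw} : Finset (Fin (k + 3)))
    have c2 : ({a, b, c, pv, pw} : Finset (Fin (k + 3))).card ≤ 5 :=
      card_insert_le' _ _ (card_insert_le' _ _ (card_insert_le' _ _
        (card_insert_le' _ _ (by simp))))
    omega)
  simp only [Finset.mem_union, Finset.mem_insert, Finset.mem_singleton, not_or] at hp1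
  obtain ⟨hp1O, hp1a, hp1b, hp1c, hp1pv, hp1pw⟩ := hp1
  -- choose p2
  obtain ⟨p2, hp2⟩ := exists_notMem_of_card_lt (O u₂ ∪ {a, b, c, pv, pw, p1}) (by
    have c1 := Finset.card_union_le (O u₂) ({a, b, c, pv, pw, p1} : Finset (Fin (k + 3)))
    have c2 : ({a, b, c, pv, pw, p1} : Finset (Fin (k + 3))).card ≤ 6 :=
      card_insert_le' _ _ (card_insert_le' _ _ (card_insert_le' _ _
        (card_insert_le' _ _ (card_insert_le' _ _ (by simp)))))
    omega)
  simp only [Finset.mem_union, Finset.mem_insert, Finset.mem_singleton, not_or] at hp2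
  obtain ⟨hp2O, hp2a, hp2b, hp2c, hp2pv, hp2pw, hp2p1⟩ := hp2
  have hIu1p1 : (I u₁ ∪ {p1}).card ≤ 3 := by
    have c1 := Finset.card_union_le (I u₁) ({p1} : Finset (Fin (k + 3)))
    simp only [Finset.card_singleton] at c1
    omega
  have hIu2p2 : (I u₂ ∪ {p2}).card ≤ 3 := by
    have c1 := Finset.card_union_le (I u₂) ({p2} : Finset (Fin (k + 3)))
    simp only [Finset.card_singleton] at c1
    omega
  -- symmetric ne facts
  have d12 : p1 ≠ p2 := Ne.symm hp2p1
  have d21 : p2 ≠ p1 := hp2p1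
  have dw1 : pw ≠ p1 := Ne.symm hp1pw
  have dv1 : pv ≠ p1 := Ne.symm hp1pv
  have dw2 : pw ≠ p2 := Ne.symm hp2pw
  have dv2 : pv ≠ p2 := Ne.symm hp2pv
  have dwv : pw ≠ pv := Ne.symm hpvpw
  have dwb : pw ≠ b := Ne.symm hbpw
  have dwc : pw ≠ c := Ne.symm hcpw
  have dvb : pv ≠ b := Ne.symm hbpv
  have dvc : pv ≠ c := Ne.symm hcpv
  -- the extended coloring
  set φ : V → V → Fin (k + 3) := fun x y =>
    if x = u then (if y = u₁ then p1 else if y = u₂ then p2 else if y = w then pw else pv)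
    else if y = u then (if x = u₁ ∨ x = u₂ then a else if x = w then b else c)
    else ψ x y with hφdef
  have e1 : φ u u₁ = p1 := by simp [hφdef]
  have e2 : φ u u₂ = p2 := by simp [hφdef, Ne.symm h12]
  have e3 : φ u w = pw := by simp [hφdef, Ne.symm h1w, Ne.symm h2w]
  have e4 : φ u v = pv := by simp [hφdef, Ne.symm h1v, Ne.symm h2v, Ne.symm hwv]
  have e5 : φ u₁ u = a := by simp [hφdef, hu1]
  have e6 : φ u₂ u = a := by simp [hφdef, hu2, Ne.symm h12]
  have e7 : φ w u = b := by simp [hφdef, hwu, Ne.symm h1w, Ne.symm h2w, h1w.symm, h2w.symm]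
  have e8 : φ v u = c := by
    simp [hφdef, hvu, Ne.symm h1v, Ne.symm h2v, Ne.symm hwv, h1v.symm, h2v.symm, hwv.symm]
  have e0 : ∀ x y, x ≠ u → y ≠ u → φ x y = ψ x y := by
    intro x y hx hy
    simp [hφdef, hx, hy]
  have hin_u : ∀ x, G.Adj u x → φ x u ∉ O x ∧ φ x u ∉ I x ∧ φ u x ∉ O x := by
    intro x hx
    rcases hN x hx with rfl|rfl|rfl|rfl
    · exact ⟨e5.symm ▸ haO1, e5.symm ▸ haI1, e1.symm ▸ hp1O⟩
    · exact ⟨e6.symm ▸ haO2, e6.symm ▸ haI2, e2.symm ▸ hp2O⟩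
    · exact ⟨e7.symm ▸ hbOw, e7.symm ▸ hbIw, e3.symm ▸ hpwOw⟩
    · exact ⟨e8.symm ▸ hcOv, e8.symm ▸ hcIv, e4.symm ▸ hpvOv⟩
  have houtd : ∀ y' t', G.Adj u y' → G.Adj u t' → y' ≠ t' → φ u y' ≠ φ u t' := by
    intro y' t' hy' ht' hne'
    rcases hN y' hy' with rfl|rfl|rfl|rfl <;> rcases hN t' ht' with rfl|rfl|rfl|rfl <;>
      simp only [e1, e2, e3, e4] <;>
      first
        | exact absurd rfl hne'
        | assumption
  have hcross : ∀ y' z', G.Adj u y' → G.Adj u z' → φ u y' ≠ φ z' u := by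
    intro y' z' hy' hz'
    rcases hN y' hy' with rfl|rfl|rfl|rfl <;> rcases hN z' hz' with rfl|rfl|rfl|rfl <;>
      simp only [e1, e2, e3, e4, e5, e6, e7, e8] <;> assumption
  refine ⟨φ, ?_, ?_⟩
  · intro x y z t hxy hzt hne hcond0
    have hcond : x = z ∨ y = z ∨ x = t := (sym2_cond hxy.ne hzt.ne).1 hcond0
    by_cases hx : x = u
    · subst x
      by_cases hz : z = u
      · subst z
        exact houtd y t hxy hzt (fun h => hne (by rw [h]))
      · by_cases ht : t = u
        · subst t
          exact hcross y z hxy hzt.symm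
        · have hyz : y = z := by
            rcases hcond with h|h|h
            · exact absurd h.symm hz
            · exact h
            · exact absurd h.symm ht
          subst z
          rw [e0 y t hz ht]
          intro hEq
          exact (hin_u y hxy).2.2 (by rw [hEq]; exact memO ht hzt)
    · by_cases hy : y = u
      · subst y
        by_cases hz : z = u
        · subst z
          exact fun hEq => hcross t x hzt hxy.symm hEq.symm
        · by_cases ht : t = u
          · subst t
            have hxz : x = z := by
              rcases hcond with h|h|h
              · exact h
              · exact absurd h.symm hz
              · exact absurd h hx
            exact absurd (by rw [hxz]) hne
          · rcases hcond with h|h|h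
            · subst z
              rw [e0 x t hz ht]
              intro hEq
              exact (hin_u x hxy.symm).1 (by rw [hEq]; exact memO ht hzt)
            · exact absurd h.symm hz
            · subst t
              rw [e0 z x hz hx]
              intro hEq
              exact (hin_u x hxy.symm).2.1 (by rw [hEq]; exact memI hz hzt.symm)
      · by_cases hz : z = u
        · subst z
          have hxt : x = t := by
            rcases hcond with h|h|h
            · exact absurd h hx
            · exact absurd h hy
            · exact h
          subst t
          rw [e0 x y hx hy]
          intro hEq
          exact (hin_u x hzt).2.2 (by rw [← hEq]; exact memO hy hxy)
        · by_cases ht : t = u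
          · subst t
            rw [e0 x y hx hy]
            rcases hcond with h|h|h
            · subst z
              intro hEq
              exact (hin_u x hzt.symm).1 (by rw [← hEq]; exact memO hy hxy)
            · subst z
              intro hEq
              exact (hin_u y hzt.symm).2.1 (by rw [← hEq]; exact memI hx hxy.symm)
            · exact absurd h hx
          · rw [e0 x y hx hy, e0 z t hz ht]
            exact hψ hx hy hz ht hxy hzt hne hcond
  · intro v₀
    have hbound : ∀ (B : Finset (Fin (k + 3))), B.card ≤ 3 →
        (∀ y, G.Adj y v₀ → φ y v₀ ∈ B) →
        ({c' : Fin (k + 3) | ∃ y, G.Adj y v₀ ∧ φ y v₀ = c'}).ncard ≤ 3 := by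
      intro B hB hmem
      have hsub' : {c' : Fin (k + 3) | ∃ y, G.Adj y v₀ ∧ φ y v₀ = c'} ⊆
          (↑B : Set (Fin (k + 3))) := by
        rintro c' ⟨y, hy, rfl⟩
        exact Finset.mem_coe.mpr (hmem y hy)
      have := Set.ncard_le_ncard hsub' (Set.toFinite _)
      rw [Set.ncard_coe_finset] at this
      omega
    by_cases h0 : v₀ = u
    · subst v₀
      refine hbound {a, b, c} (card_insert_le' _ _ (card_insert_le' _ _ (by simp))) ?_
      intro y hy
      rcases hN y hy.symm with rfl|rfl|rfl|rfl
      · rw [e5]; simp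
      · rw [e6]; simp
      · rw [e7]; simp
      · rw [e8]; simp
    · by_cases hh1 : v₀ = u₁
      · subst v₀
        refine hbound (I u₁ ∪ {p1}) hIu1p1 ?_
        intro y hy
        by_cases hyu : y = u
        · subst y
          rw [e1]
          simp
        · rw [e0 y u₁ hyu hu1]
          exact Finset.mem_union_left _ (memI hyu hy.symm)
      · by_cases hh2 : v₀ = u₂
        · subst v₀
          refine hbound (I u₂ ∪ {p2}) hIu2p2 ?_
          intro y hy
          by_cases hyu : y = u
          · subst y
            rw [e2]
            simp
          · rw [e0 y u₂ hyu hu2]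
            exact Finset.mem_union_left _ (memI hyu hy.symm)
        · by_cases hhw : v₀ = w
          · subst v₀
            refine hbound (I w ∪ {pw}) hIwpw ?_
            intro y hy
            by_cases hyu : y = u
            · subst y
              rw [e3]
              simp
            · rw [e0 y w hyu hwu]
              exact Finset.mem_union_left _ (memI hyu hy.symm)
          · by_cases hhv : v₀ = v
            · subst v₀
              refine hbound (I v ∪ {pv}) hIvpv ?_
              intro y hy
              by_cases hyu : y = u
              · subst y
                rw [e4]
                simp
              · rw [e0 y v hyu hvu]
                exact Finset.mem_union_left _ (memI hyu hy.symm)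
            · refine hbound (I v₀) (hI3 v₀ h0) ?_
              intro y hy
              have hyu : y ≠ u := by
                intro hEq
                subst y
                rcases hN v₀ hy with rfl|rfl|rfl|rfl
                · exact hh1 rfl
                · exact hh2 rfl
                · exact hhw rfl
                · exact hhv rfl
              rw [e0 y v₀ hyu h0]
              exact memI hyu hy.symm
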